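/- Let f ∈ C¹[a,b] be such that f(t) ≠ 0 for all t ∈ [a,b]. Then 1/f ∈ C¹[a,b] and ‖1/f‖_{C¹} ≤ ‖1/f‖_{C⁰}² ‖f‖_{C¹}, where ‖1/f‖_{C⁰} = sup_t |f(t)|^{−1}. Hence C¹[a,b] admits norm-controlled inversion in C[a,b] with control function h(s,t) = s t². -/

import Mathlib

open Set

noncomputable def normC0 (a b : ℝ) (f : ℝ → ℝ) : ℝ :=
  ⨆ t : Icc a b, |f t.1|

noncomputable def normC1 (a b : ℝ) (f : ℝ → ℝ) : ℝ :=
  normC0 a b f + normC0 a b (derivWithin f (Icc a b))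

lemma bddAux (a b : ℝ) (g : ℝ → ℝ) (hg : ContinuousOn g (Icc a b)) :
    BddAbove (Set.range fun t : Icc a b => |g t.1|) := by
  have h : (fun t => |g t|) '' (Icc a b) = Set.range fun t : Icc a b => |g t.1| :=
    Set.image_eq_range _ _
  rw [← h]
  exact (isCompact_Icc.image_of_continuousOn hg.abs).bddAbove

lemma le_normC0 (a b : ℝ) (g : ℝ → ℝ) (hg : ContinuousOn g (Icc a b))
    {t : ℝ} (ht : t ∈ Icc a b) : |g t| ≤ normC0 a b g :=
  le_ciSup (bddAux a b g hg) (⟨t, ht⟩ : Icc a b)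

lemma normC0_le (a b : ℝ) (hab : a ≤ b) (g : ℝ → ℝ) {M : ℝ}
    (hM : ∀ t ∈ Icc a b, |g t| ≤ M) : normC0 a b g ≤ M := by
  have : Nonempty (Icc a b) := ⟨⟨a, by simp [hab]⟩⟩
  exact ciSup_le fun t => hM t.1 t.2

theorem stmt7 (a b : ℝ) (hab : a < b) (f : ℝ → ℝ)
    (hf : ContDiffOn ℝ 1 f (Icc a b)) (hne : ∀ t ∈ Icc a b, f t ≠ 0) :
    ContDiffOn ℝ 1 (fun t => (f t)⁻¹) (Icc a b) ∧
      normC1 a b (fun t => (f t)⁻¹) ≤ normC0 a b (fun t => (f t)⁻¹) ^ 2 * normC1 a b f := by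
  have hs : UniqueDiffOn ℝ (Icc a b) := uniqueDiffOn_Icc hab
  have ha : a ∈ Icc a b := by simp [hab.le]
  have hinv : ContDiffOn ℝ 1 (fun t => (f t)⁻¹) (Icc a b) := hf.inv hne
  refine ⟨hinv, ?_⟩
  -- continuity facts
  have hcf : ContinuousOn f (Icc a b) := hf.continuousOn
  have hcg : ContinuousOn (fun t => (f t)⁻¹) (Icc a b) := hinv.continuousOn
  have hcf' : ContinuousOn (derivWithin f (Icc a b)) (Icc a b) :=
    hf.continuousOn_derivWithin hs le_rfl
  have hcg' : ContinuousOn (derivWithin (fun t => (f t)⁻¹) (Icc a b)) (Icc a b) :=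
    hinv.continuousOn_derivWithin hs le_rfl
  -- derivative formula
  have hder : ∀ t ∈ Icc a b, derivWithin (fun t => (f t)⁻¹) (Icc a b) t
      = -(derivWithin f (Icc a b) t) / (f t) ^ 2 := by
    intro t ht
    have hd : HasDerivWithinAt f (derivWithin f (Icc a b) t) (Icc a b) t :=
      ((hf.differentiableOn one_ne_zero) t ht).hasDerivWithinAt
    exact (hd.inv (hne t ht)).derivWithin (hs t ht)
  set N := normC0 a b (fun t => (f t)⁻¹) with hN
  set F := normC0 a b f with hF
  set F' := normC0 a b (derivWithin f (Icc a b)) with hF'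
  have hNle : ∀ t ∈ Icc a b, |(f t)⁻¹| ≤ N := fun t ht => le_normC0 a b _ hcg ht
  have hFle : ∀ t ∈ Icc a b, |f t| ≤ F := fun t ht => le_normC0 a b _ hcf ht
  have hF'le : ∀ t ∈ Icc a b, |derivWithin f (Icc a b) t| ≤ F' :=
    fun t ht => le_normC0 a b _ hcf' ht
  have hN0 : 0 ≤ N := le_trans (abs_nonneg _) (hNle a ha)
  have hF'0 : 0 ≤ F' := le_trans (abs_nonneg _) (hF'le a ha)
  have hone : 1 ≤ N * F := by
    have h1 : |(f a)⁻¹| * |f a| = 1 := by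
      rw [← abs_mul, inv_mul_cancel₀ (hne a ha), abs_one]
    calc 1 = |(f a)⁻¹| * |f a| := h1.symm
      _ ≤ N * F := mul_le_mul (hNle a ha) (hFle a ha) (abs_nonneg _) hN0
  -- bound the derivative part
  have hd : normC0 a b (derivWithin (fun t => (f t)⁻¹) (Icc a b)) ≤ N ^ 2 * F' := by
    apply normC0_le a b hab.le
    intro t ht
    rw [hder t ht]
    have h1 : |(-(derivWithin f (Icc a b) t) / (f t) ^ 2)|
        = |derivWithin f (Icc a b) t| * |(f t)⁻¹| ^ 2 := by
      rw [abs_div, abs_neg, abs_pow, abs_inv, div_eq_mul_inv, inv_pow]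
    rw [h1]
    have h2 : |(f t)⁻¹| ^ 2 ≤ N ^ 2 := pow_le_pow_left₀ (abs_nonneg _) (hNle t ht) 2
    calc |derivWithin f (Icc a b) t| * |(f t)⁻¹| ^ 2
        ≤ F' * N ^ 2 := mul_le_mul (hF'le t ht) h2 (by positivity) hF'0
      _ = N ^ 2 * F' := by ring
  have hn : N ≤ N ^ 2 * F := by nlinarith
  have : normC1 a b (fun t => (f t)⁻¹)
      = N + normC0 a b (derivWithin (fun t => (f t)⁻¹) (Icc a b)) := rfl
  rw [this]
  have : normC1 a b f = F + F' := rfl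
  rw [this]
  nlinarith
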